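/- The kernel of A in S(ℝⁿ) is trivial if and only if the kernel of Ã in S(ℝ^{n+k}) is trivial; that is, (Aψ = 0 with ψ ∈ S(ℝⁿ) implies ψ = 0) if and only if (ÃΨ = 0 with Ψ ∈ S(ℝ^{n+k}) implies Ψ = 0). -/

import Mathlib

open MeasureTheory Complex SchwartzMap
open scoped ComplexConjugate ContDiff

/-- There exists a Schwartz function on `ℝᵏ` that is nonzero at some point. -/
theorem exists_ne_zero_schwartz (k : ℕ) : ∃ χ : 𝓢(Fin k → ℝ, ℂ), ∃ y, χ y ≠ 0 := by
  have f : ContDiffBump (0 : Fin k → ℝ) := ⟨1, 2, one_pos, one_lt_two⟩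
  have hF : ContDiff ℝ ∞ (fun x => (f x : ℂ)) :=
    Complex.ofRealCLM.contDiff.comp f.contDiff
  have hc : HasCompactSupport (fun x => (f x : ℂ)) :=
    f.hasCompactSupport.comp_left (g := (fun r : ℝ => (r : ℂ))) (by simp)
  refine ⟨⟨fun x => (f x : ℂ), hF, ?_⟩, 0, ?_⟩
  · intro m p
    have hG : HasCompactSupport (iteratedFDeriv ℝ p (fun x => (f x : ℂ))) :=
      hc.iteratedFDeriv p
    have hGc : Continuous (iteratedFDeriv ℝ p (fun x => (f x : ℂ))) :=
      hF.continuous_iteratedFDeriv (by exact_mod_cast le_top)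
    have hcs : HasCompactSupport
        (fun x : Fin k → ℝ => ‖x‖ ^ m * ‖iteratedFDeriv ℝ p (fun x => (f x : ℂ)) x‖) :=
      hG.norm.mul_left
    obtain ⟨C, hC⟩ := ((continuous_norm.pow m).mul hGc.norm).bounded_above_of_compact_support hcs
    exact ⟨C, fun x => by simpa using hC x⟩
  · have : f 0 = 1 := f.one_of_mem_closedBall (by simp [f.rIn_pos.le])
    show ((f 0 : ℝ) : ℂ) ≠ 0
    rw [this]; norm_num

/-- The kernel of `A` in `S(ℝⁿ)` is trivial if and only if the kernel
of `Ã` in `S(ℝ^{n+k})` is trivial. -/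
theorem stmt8 (n k : ℕ) (hn : 0 < n) (hk : 0 < k)
    -- `Ŝ` : a unitary operator mapping `S(ℝ^{n+k})` into itself, together with `Ŝ⁻¹`
    (Sh : 𝓢((Fin n → ℝ) × (Fin k → ℝ), ℂ) ≃L[ℂ] 𝓢((Fin n → ℝ) × (Fin k → ℝ), ℂ))
    -- unitarity of `Ŝ` (preservation of the `L²` inner product)
    (hSh : ∀ Φ Ψ : 𝓢((Fin n → ℝ) × (Fin k → ℝ), ℂ),
      ∫ p, conj (Sh Φ p) * Sh Ψ p = ∫ p, conj (Φ p) * Ψ p)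
    -- the tensor product `(ψ ⊗ χ)(x,y) = ψ(x)χ(y)` of Schwartz functions
    (tensor : 𝓢(Fin n → ℝ, ℂ) → 𝓢(Fin k → ℝ, ℂ) → 𝓢((Fin n → ℝ) × (Fin k → ℝ), ℂ))
    (htensor : ∀ ψ χ p, tensor ψ χ p = ψ p.1 * χ p.2)
    -- the adjoint intertwiners `T*_{Ŝ,χ}`, mapping `S(ℝ^{n+k})` into `S(ℝⁿ)`:
    (Tstar : 𝓢(Fin k → ℝ, ℂ) → 𝓢((Fin n → ℝ) × (Fin k → ℝ), ℂ) → 𝓢(Fin n → ℝ, ℂ))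
    -- `(T*_{Ŝ,χ}Φ)(x) = ∫ conj(χ(y)) (ŜΦ)(x,y) dy`
    (hTstar : ∀ (χ : 𝓢(Fin k → ℝ, ℂ)) (Φ : 𝓢((Fin n → ℝ) × (Fin k → ℝ), ℂ))
      (x : Fin n → ℝ), Tstar χ Φ x = ∫ y : Fin k → ℝ, conj (χ y) * Sh Φ (x, y))
    (A : 𝓢(Fin n → ℝ, ℂ) →L[ℂ] 𝓢(Fin n → ℝ, ℂ))
    (Atil : 𝓢((Fin n → ℝ) × (Fin k → ℝ), ℂ) →L[ℂ] 𝓢((Fin n → ℝ) × (Fin k → ℝ), ℂ))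
    -- the intertwining relation `Ã ∘ T_{Ŝ,χ} = T_{Ŝ,χ} ∘ A`, where `T_{Ŝ,χ}ψ = Ŝ⁻¹(ψ ⊗ χ)`
    (hint1 : ∀ (χ : 𝓢(Fin k → ℝ, ℂ)) (ψ : 𝓢(Fin n → ℝ, ℂ)),
      Atil (Sh.symm (tensor ψ χ)) = Sh.symm (tensor (A ψ) χ))
    -- the intertwining relation `T*_{Ŝ,χ} ∘ Ã = A ∘ T*_{Ŝ,χ}`
    (hint2 : ∀ (χ : 𝓢(Fin k → ℝ, ℂ)) (Φ : 𝓢((Fin n → ℝ) × (Fin k → ℝ), ℂ)),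
      Tstar χ (Atil Φ) = A (Tstar χ Φ)) :
    (∀ ψ : 𝓢(Fin n → ℝ, ℂ), A ψ = 0 → ψ = 0) ↔
      (∀ Ψ : 𝓢((Fin n → ℝ) × (Fin k → ℝ), ℂ), Atil Ψ = 0 → Ψ = 0) := by
  constructor
  · -- `ker A = 0 → ker Ã = 0`
    intro hA Ψ hΨ
    -- first, `T*_{Ŝ,χ} 0 = 0`, hence `A (T*_{Ŝ,χ} Ψ) = 0`, hence `T*_{Ŝ,χ} Ψ = 0` for all `χ`
    have hT0 : ∀ χ : 𝓢(Fin k → ℝ, ℂ), Tstar χ Ψ = 0 := by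
      intro χ
      apply hA
      rw [← hint2, hΨ]
      ext x
      rw [hTstar]
      simp [map_zero Sh]
    -- conclude that `Ŝ Ψ` vanishes pointwise
    have key : ∀ (x : Fin n → ℝ) (y : Fin k → ℝ), Sh Ψ (x, y) = 0 := by
      intro x y
      -- the slice `y ↦ (x, y)` has temperate growth
      have hg : Function.HasTemperateGrowth
          (fun y : Fin k → ℝ => ((x, y) : (Fin n → ℝ) × (Fin k → ℝ))) := by
        have heq : (fun y : Fin k → ℝ => ((x, y) : (Fin n → ℝ) × (Fin k → ℝ)))
            = fun y => ((x, 0) + ContinuousLinearMap.inr ℝ (Fin n → ℝ) (Fin k → ℝ) y) := by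
          funext y; simp
        rw [heq]
        apply Function.HasTemperateGrowth.of_fderiv (k := 1) (C := ‖x‖ + 1)
        · have : (fderiv ℝ fun y : Fin k → ℝ =>
              ((x, 0) + ContinuousLinearMap.inr ℝ (Fin n → ℝ) (Fin k → ℝ) y))
              = fun _ => ContinuousLinearMap.inr ℝ (Fin n → ℝ) (Fin k → ℝ) := by
            funext y
            rw [fderiv_const_add]
            exact (ContinuousLinearMap.inr ℝ (Fin n → ℝ) (Fin k → ℝ)).fderiv
          rw [this]
          exact .const _
        · exact (differentiable_const _).add
            (ContinuousLinearMap.inr ℝ (Fin n → ℝ) (Fin k → ℝ)).differentiable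
        · intro y
          have h1 : ‖((x, y) : (Fin n → ℝ) × (Fin k → ℝ))‖ = max ‖x‖ ‖y‖ := rfl
          have h2 : (0:ℝ) ≤ ‖y‖ := norm_nonneg _
          have h3 : (0:ℝ) ≤ ‖x‖ := norm_nonneg _
          simp only [ContinuousLinearMap.inr_apply, Prod.mk_add_mk, add_zero, zero_add, h1]
          calc max ‖x‖ ‖y‖ ≤ ‖x‖ + ‖y‖ := max_le_add_of_nonneg h3 h2
            _ ≤ (‖x‖ + 1) * (1 + ‖y‖) ^ 1 := by nlinarith
      have hup : ∃ (m : ℕ) (C : ℝ), ∀ y : Fin k → ℝ,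
          ‖y‖ ≤ C * (1 + ‖(fun y : Fin k → ℝ =>
            ((x, y) : (Fin n → ℝ) × (Fin k → ℝ))) y‖) ^ m := by
        refine ⟨1, 1, fun y => ?_⟩
        have h1 : ‖((x, y) : (Fin n → ℝ) × (Fin k → ℝ))‖ = max ‖x‖ ‖y‖ := rfl
        have := le_max_right ‖x‖ ‖y‖
        simp only [h1, pow_one, one_mul]
        linarith
      -- the slice of `Ŝ Ψ` at `x` is a Schwartz function of `y`
      set χ : 𝓢(Fin k → ℝ, ℂ) := SchwartzMap.compCLM ℂ hg hup (Sh Ψ) with hχdef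
      have hχ : ∀ y', χ y' = Sh Ψ (x, y') := fun y' => rfl
      have h0 : (0 : ℂ) = ∫ y' : Fin k → ℝ, conj (χ y') * Sh Ψ (x, y') := by
        rw [← hTstar χ Ψ x, hT0 χ]; rfl
      have h0' : (0 : ℂ) = ∫ y' : Fin k → ℝ, ((normSq (χ y') : ℝ) : ℂ) := by
        rw [h0]; congr 1; funext y'
        rw [← hχ y', Complex.normSq_eq_conj_mul_self]
      have h0'' : (0 : ℂ) = ((∫ y' : Fin k → ℝ, normSq (χ y') : ℝ) : ℂ) :=
        h0'.trans integral_ofReal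
      have hreal : ∫ y' : Fin k → ℝ, normSq (χ y') = 0 := by exact_mod_cast h0''.symm
      -- integrability of `y ↦ |χ y|²`
      obtain ⟨M, hMpos, hM⟩ := χ.decay 0 0
      have hMb : ∀ y', ‖χ y'‖ ≤ M := by
        intro y'
        simpa [norm_iteratedFDeriv_zero] using hM y'
      have hsq : ∀ y', normSq (χ y') = ‖χ y'‖ * ‖χ y'‖ := by
        intro y'
        rw [Complex.normSq_eq_norm_sq, sq]
      have hint : Integrable (fun y' : Fin k → ℝ => normSq (χ y')) volume := by
        refine Integrable.mono' ((χ.integrable (μ := volume)).norm.const_mul M)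
          ((Complex.continuous_normSq.comp χ.continuous).aestronglyMeasurable)
          (Filter.Eventually.of_forall fun y' => ?_)
        rw [Real.norm_eq_abs, _root_.abs_of_nonneg (normSq_nonneg _), hsq]
        exact mul_le_mul_of_nonneg_right (hMb y') (norm_nonneg _)
      -- a nonnegative continuous function with zero integral vanishes
      have hae := (integral_eq_zero_iff_of_nonneg (fun y' => normSq_nonneg (χ y')) hint).mp hreal
      have heq : (fun y' : Fin k → ℝ => normSq (χ y')) = 0 :=
        ((Complex.continuous_normSq.comp χ.continuous).ae_eq_iff_eq volume
          continuous_const).mp hae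
      have : normSq (χ y) = 0 := congrFun heq y
      rw [← hχ y]
      exact normSq_eq_zero.mp this
    have hSh0 : Sh Ψ = 0 := by
      ext p
      have := key p.1 p.2
      simpa using this
    have : Sh Ψ = Sh 0 := by rw [hSh0, map_zero]
    exact Sh.injective this
  · -- `ker Ã = 0 → ker A = 0`
    intro hAt ψ hψ
    obtain ⟨χ, y₀, hy₀⟩ := exists_ne_zero_schwartz k
    have h1 : Atil (Sh.symm (tensor ψ χ)) = 0 := by
      rw [hint1, hψ]
      have : tensor 0 χ = 0 := by
        ext p
        rw [htensor]
        simp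
      rw [this, map_zero]
    have h2 : Sh.symm (tensor ψ χ) = 0 := hAt _ h1
    have h3 : tensor ψ χ = 0 := by
      have : Sh.symm (tensor ψ χ) = Sh.symm 0 := by rw [h2, map_zero]
      exact Sh.symm.injective this
    ext x
    have ht : ψ x * χ y₀ = 0 := by
      rw [← htensor ψ χ (x, y₀), h3]; simp
    rcases mul_eq_zero.mp ht with h | h
    · simpa using h
    · exact absurd h hy₀
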